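/- arXiv:2202.06617 — 3 statements merged into one kernel-verified Lean document; each statement's English description precedes it below -/
import Mathlib

section
/- In the full-information Bernoulli experts setting with finite action set A containing an action a* with p_{a*} = 1, the regret of Follow-The-Leader satisfies R_T(FTL) ≤ 1 + |{a ∈ A : p_a ∈ (0,1)}| for every horizon T, uniformly in T. -/
open MeasureTheory ProbabilityTheory
open scoped Classical

/-- Full-information Bernoulli experts with an action `astar` having
`p astar = 1`.  The regret of FTL (with an arbitrary tie-breaking rule) over any
horizon `T` is at most `1 + #{a : p a ∈ (0,1)}`, uniformly in `T`.  Since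
`max_a p a = 1`, the regret is `T − E[Σ_{t<T} B t (Act t)]`. -/
theorem stmt_4
    {Ω : Type*} [MeasurableSpace Ω] (μ : Measure Ω) [IsProbabilityMeasure μ]
    {A : Type*} [Fintype A] [Nonempty A] [MeasurableSpace A] [MeasurableSingletonClass A]
    (p : A → ℝ) (hp0 : ∀ a, 0 ≤ p a) (hp1 : ∀ a, p a ≤ 1)
    (astar : A) (hstar : p astar = 1)
    (B : ℕ → A → Ω → ℝ)
    (hmeas : ∀ t a, Measurable (B t a))
    (hval : ∀ t a ω, B t a ω = 0 ∨ B t a ω = 1)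
    (hbern : ∀ t a, μ {ω | B t a ω = 1} = ENNReal.ofReal (p a))
    (hindep : iIndepFun
      (fun (ta : ℕ × A) => B ta.1 ta.2) μ)
    (Act : ℕ → Ω → A)
    (hActmeas : ∀ t, Measurable (Act t))
    -- FTL with an arbitrary (measurable) tie-breaking rule: the choice is a leader
    (hFTL : ∀ t ω a, (∑ s ∈ Finset.range t, B s a ω)
      ≤ ∑ s ∈ Finset.range t, B s (Act t ω) ω)
    (T : ℕ) :
    (T : ℝ) - ∫ ω, (∑ t ∈ Finset.range T, B t (Act t ω) ω) ∂μ
      ≤ 1 + ((Finset.univ.filter (fun a : A => 0 < p a ∧ p a < 1)).card : ℝ) := by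
  classical
  set K := (Finset.univ.filter (fun a : A => 0 < p a ∧ p a < 1)).card with hK
  -- measurability of the played reward
  have hgmeas : ∀ t, Measurable (fun ω => B t (Act t ω) ω) := by
    intro t
    have heq : (fun ω => B t (Act t ω) ω) =
        fun ω => ∑ a : A, if Act t ω = a then B t a ω else 0 := by
      funext ω
      rw [Finset.sum_ite_eq Finset.univ (Act t ω) (fun a => B t a ω)]
      simp
    rw [heq]
    refine Finset.measurable_sum _ fun a _ => Measurable.ite ?_ (hmeas t a) measurable_const
    exact (hActmeas t) (measurableSet_singleton a)
  have hgint : ∀ t, Integrable (fun ω => B t (Act t ω) ω) μ := by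
    intro t
    refine Integrable.mono' (integrable_const (1 : ℝ)) (hgmeas t).aestronglyMeasurable ?_
    refine ae_of_all _ fun ω => ?_
    rcases hval t (Act t ω) ω with h | h <;> simp [h]
  -- a.e. behaviour of deterministic arms
  have hnull1 : ∀ t a, p a = 1 → ∀ᵐ ω ∂μ, B t a ω = 1 := by
    intro t a ha
    have hms : MeasurableSet {ω | B t a ω = 1} := hmeas t a (measurableSet_singleton 1)
    have h1 : μ {ω | B t a ω = 1} = 1 := by
      rw [hbern t a, ha, ENNReal.ofReal_one]
    have h0 : μ {ω | B t a ω = 1}ᶜ = 0 := by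
      rw [measure_compl hms (measure_ne_top μ _), h1, measure_univ, tsub_self]
    exact ae_iff.mpr h0
  have hnull0 : ∀ t a, p a = 0 → ∀ᵐ ω ∂μ, B t a ω = 0 := by
    intro t a ha
    have h1 : μ {ω | B t a ω = 1} = 0 := by rw [hbern t a, ha, ENNReal.ofReal_zero]
    refine ae_iff.mpr (measure_mono_null ?_ h1)
    intro ω hω
    exact (hval t a ω).resolve_left hω
  have hG : ∀ᵐ ω ∂μ, ∀ (t : ℕ) (a : A),
      (p a = 1 → B t a ω = 1) ∧ (p a = 0 → B t a ω = 0) := by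
    rw [ae_all_iff]
    intro t
    rw [ae_all_iff]
    intro a
    have e1 : ∀ᵐ ω ∂μ, (p a = 1 → B t a ω = 1) := by
      by_cases h : p a = 1
      · filter_upwards [hnull1 t a h] with ω hω _ using hω
      · exact ae_of_all _ fun ω h' => absurd h' h
    have e0 : ∀ᵐ ω ∂μ, (p a = 0 → B t a ω = 0) := by
      by_cases h : p a = 0
      · filter_upwards [hnull0 t a h] with ω hω _ using hω
      · exact ae_of_all _ fun ω h' => absurd h' h
    exact e1.and e0
  -- the key pathwise bound
  have key : ∀ ω, (∀ (t : ℕ) (a : A),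
      (p a = 1 → B t a ω = 1) ∧ (p a = 0 → B t a ω = 0)) →
      ∑ t ∈ Finset.range T, (1 - B t (Act t ω) ω) ≤ 1 + (K : ℝ) := by
    intro ω hω
    -- the played action has succeeded in all previous rounds
    have hsucc : ∀ t s : ℕ, s < t → B s (Act t ω) ω = 1 := by
      intro t s hs
      by_contra hne
      have hs0 : B s (Act t ω) ω = 0 := (hval s (Act t ω) ω).resolve_right hne
      have hle := hFTL t ω astar
      have hstar_sum : ∑ u ∈ Finset.range t, B u astar ω = (t : ℝ) := by
        rw [Finset.sum_congr rfl fun u _ => (hω u astar).1 hstar]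
        simp
      rw [hstar_sum] at hle
      have hub : ∑ u ∈ Finset.range t, B u (Act t ω) ω
          ≤ ∑ u ∈ Finset.range t, (1 - if u = s then (1 : ℝ) else 0) := by
        refine Finset.sum_le_sum fun u _ => ?_
        by_cases h : u = s
        · simp [h, hs0]
        · rcases hval u (Act t ω) ω with h0 | h0 <;> norm_num [h, h0]
      have hub2 : ∑ u ∈ Finset.range t, (1 - if u = s then (1 : ℝ) else 0)
          = (t : ℝ) - 1 := by
        rw [Finset.sum_sub_distrib, Finset.sum_const, Finset.card_range,
          Finset.sum_ite_eq' (Finset.range t) s (fun _ => (1 : ℝ)),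
          if_pos (Finset.mem_range.2 hs)]
        simp
      rw [hub2] at hub
      linarith
    set F := (Finset.range T).filter (fun t => B t (Act t ω) ω = 0) with hF
    have hsum : ∑ t ∈ Finset.range T, (1 - B t (Act t ω) ω) = (F.card : ℝ) := by
      rw [hF, ← Finset.sum_boole]
      refine Finset.sum_congr rfl fun t _ => ?_
      rcases hval t (Act t ω) ω with h0 | h0 <;> simp [h0]
    have hmapinj : (F.erase 0).card ≤ K := by
      rw [hK]
      apply Finset.card_le_card_of_injOn (fun t => Act t ω)
      · intro t ht
        rw [Finset.mem_coe, Finset.mem_erase] at ht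
        obtain ⟨ht0, htF⟩ := ht
        rw [hF, Finset.mem_filter] at htF
        obtain ⟨-, htfail⟩ := htF
        rw [Finset.mem_coe, Finset.mem_filter]
        refine ⟨Finset.mem_univ _, ?_, ?_⟩
        · rcases eq_or_lt_of_le (hp0 (Act t ω)) with h | h
          · exfalso
            have hz := (hω 0 (Act t ω)).2 h.symm
            have h1 := hsucc t 0 (Nat.pos_of_ne_zero ht0)
            rw [hz] at h1
            norm_num at h1
          · exact h
        · rcases eq_or_lt_of_le (hp1 (Act t ω)) with h | h
          · exfalso
            have ho := (hω t (Act t ω)).1 h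
            rw [htfail] at ho
            norm_num at ho
          · exact h
      · intro t ht t' ht' heq
        simp only [Finset.coe_erase, Set.mem_diff, Finset.mem_coe, Finset.mem_filter,
          hF] at ht ht'
        replace heq : Act t ω = Act t' ω := heq
        by_contra hne
        rcases lt_or_gt_of_ne hne with hlt | hlt
        · have h1 := hsucc t' t hlt
          rw [← heq, ht.1.2] at h1
          norm_num at h1
        · have h1 := hsucc t t' hlt
          rw [heq, ht'.1.2] at h1
          norm_num at h1
    have hFcard : F.card ≤ 1 + (F.erase 0).card := by
      have hsub : F ⊆ insert 0 (F.erase 0) := by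
        intro t ht
        by_cases h : t = 0
        · simp [h]
        · exact Finset.mem_insert_of_mem (Finset.mem_erase.2 ⟨h, ht⟩)
      calc F.card ≤ (insert 0 (F.erase 0)).card := Finset.card_le_card hsub
        _ ≤ 1 + (F.erase 0).card := by
            rw [add_comm]; exact Finset.card_insert_le _ _
    rw [hsum]
    have : F.card ≤ 1 + K := hFcard.trans (by omega)
    exact_mod_cast this
  -- integrate
  have hint1 : ∀ t : ℕ, Integrable (fun ω => 1 - B t (Act t ω) ω) μ :=
    fun t => (integrable_const (1 : ℝ)).sub (hgint t)
  have hf_int : Integrable (fun ω => ∑ t ∈ Finset.range T, (1 - B t (Act t ω) ω)) μ :=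
    integrable_finset_sum _ fun t _ => hint1 t
  have hmain : ∫ ω, ∑ t ∈ Finset.range T, (1 - B t (Act t ω) ω) ∂μ ≤ 1 + (K : ℝ) := by
    have hb : ∀ᵐ ω ∂μ, ∑ t ∈ Finset.range T, (1 - B t (Act t ω) ω) ≤ 1 + (K : ℝ) := by
      filter_upwards [hG] with ω hω using key ω hω
    calc ∫ ω, ∑ t ∈ Finset.range T, (1 - B t (Act t ω) ω) ∂μ
        ≤ ∫ _ω, (1 + (K : ℝ)) ∂μ := integral_mono_ae hf_int (integrable_const _) hb
      _ = 1 + (K : ℝ) := by simp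
  have heq : ∫ ω, ∑ t ∈ Finset.range T, (1 - B t (Act t ω) ω) ∂μ
      = (T : ℝ) - ∫ ω, ∑ t ∈ Finset.range T, B t (Act t ω) ω ∂μ := by
    rw [integral_finset_sum _ fun t _ => hint1 t,
      integral_finset_sum _ fun t _ => hgint t]
    have hterm : ∀ t, ∫ ω, (1 - B t (Act t ω) ω) ∂μ
        = 1 - ∫ ω, B t (Act t ω) ω ∂μ := by
      intro t
      rw [integral_sub (integrable_const (1 : ℝ)) (hgint t), integral_const]
      simp
    simp_rw [hterm, Finset.sum_sub_distrib, Finset.sum_const, Finset.card_range,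
      nsmul_eq_mul, mul_one]
  rw [← heq]
  exact hmain
end

section
/- Suppose a finite action set A contains a* with p_{a*} = 1, and let S = {a : p_a ∈ (0,1)}, Z = {a : p_a = 0}. Define for each a ∈ S its first-failure time τ_a = min{t : B_t(a) = 0}. Then almost surely the set of rounds t ≥ 2 at which FTL's selected action A_t yields B_t(A_t) = 0 is contained in {τ_a : a ∈ S}, and hence has cardinality at most |S|. -/
open MeasureTheory ProbabilityTheory
open scoped Classical

/-- Full-information Bernoulli experts with `p astar = 1` (rounds
0-indexed: "round `t ≥ 2`" of the paper is `t ≥ 1` here).  Let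
`S = {a | p a ∈ (0,1)}` and, for each `ω`, let `τ a ω = sInf {t | B t a ω = 0}` be
the first-failure time of `a`.  Then almost surely the set of rounds `t ≥ 1` at
which FTL's selected action fails is contained in `{τ a : a ∈ S}`, and hence has at
most `|S|` elements. -/
theorem stmt_8
    {Ω : Type*} [MeasurableSpace Ω] (μ : Measure Ω) [IsProbabilityMeasure μ]
    {A : Type*} [Fintype A] [Nonempty A]
    (p : A → ℝ) (hp0 : ∀ a, 0 ≤ p a) (hp1 : ∀ a, p a ≤ 1)
    (astar : A) (hstar : p astar = 1)
    (B : ℕ → A → Ω → ℝ)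
    (hmeas : ∀ t a, Measurable (B t a))
    (hval : ∀ t a ω, B t a ω = 0 ∨ B t a ω = 1)
    (hbern : ∀ t a, μ {ω | B t a ω = 1} = ENNReal.ofReal (p a))
    (hindep : iIndepFun
      (fun (ta : ℕ × A) => B ta.1 ta.2) μ)
    (Act : ℕ → Ω → A)
    -- FTL with an arbitrary tie-breaking rule: the selected action is a leader
    (hFTL : ∀ t ω a, (∑ s ∈ Finset.range t, B s a ω)
      ≤ ∑ s ∈ Finset.range t, B s (Act t ω) ω) :
    ∀ᵐ ω ∂μ,
      ({t : ℕ | 1 ≤ t ∧ B t (Act t ω) ω = 0}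
          ⊆ (fun a => sInf {t : ℕ | B t a ω = 0}) '' {a : A | 0 < p a ∧ p a < 1})
        ∧ ({t : ℕ | 1 ≤ t ∧ B t (Act t ω) ω = 0}).ncard
            ≤ (Finset.univ.filter (fun a : A => 0 < p a ∧ p a < 1)).card := by
  -- a.s. event: actions with p = 1 always succeed, actions with p = 0 always fail
  have key : ∀ᵐ ω ∂μ, ∀ t : ℕ, ∀ a : A,
      (p a = 1 → B t a ω = 1) ∧ (p a = 0 → B t a ω = 0) := by
    rw [ae_all_iff]
    intro t
    rw [ae_all_iff]
    intro a
    have h1 : p a = 1 → ∀ᵐ ω ∂μ, B t a ω = 1 := by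
      intro hpa
      have hs : MeasurableSet {ω | B t a ω = 1} := by
        have := hmeas t a
        exact this (measurableSet_singleton 1)
      have hμ : μ {ω | B t a ω = 1} = 1 := by
        rw [hbern t a, hpa]; simp
      have hc : μ {ω | B t a ω = 1}ᶜ = 0 := by
        rw [measure_compl hs (measure_ne_top _ _), hμ, measure_univ]
        simp
      rw [ae_iff]
      exact hc
    have h0 : p a = 0 → ∀ᵐ ω ∂μ, B t a ω = 0 := by
      intro hpa
      have hμ : μ {ω | B t a ω = 1} = 0 := by
        rw [hbern t a, hpa]; simp
      have := (measure_eq_zero_iff_ae_notMem (μ := μ)).mp hμ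
      filter_upwards [this] with ω hω
      rcases hval t a ω with h | h
      · exact h
      · exact absurd h hω
    rcases eq_or_ne (p a) 1 with hpa | hpa
    · filter_upwards [h1 hpa] with ω hω
      exact ⟨fun _ => hω, fun h' => absurd (h'.symm.trans hpa) (by norm_num)⟩
    · rcases eq_or_ne (p a) 0 with hpa0 | hpa0
      · filter_upwards [h0 hpa0] with ω hω
        exact ⟨fun h' => absurd h' hpa, fun _ => hω⟩
      · filter_upwards with ω
        exact ⟨fun h' => absurd h' hpa, fun h' => absurd h' hpa0⟩
  filter_upwards [key] with ω hω
  have hsub : {t : ℕ | 1 ≤ t ∧ B t (Act t ω) ω = 0}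
      ⊆ (fun a => sInf {t : ℕ | B t a ω = 0}) '' {a : A | 0 < p a ∧ p a < 1} := by
    rintro t ⟨ht1, ht0⟩
    set a := Act t ω with ha
    -- all earlier rewards of a are 1
    have hearly : ∀ s < t, B s a ω = 1 := by
      by_contra hcon
      push_neg at hcon
      obtain ⟨s₀, hs₀t, hs₀⟩ := hcon
      have hs₀0 : B s₀ a ω = 0 := (hval s₀ a ω).resolve_right hs₀
      have hle : (t : ℝ) ≤ ∑ s ∈ Finset.range t, B s a ω := by
        have := hFTL t ω astar
        have hsum : ∑ s ∈ Finset.range t, B s astar ω = t := by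
          rw [Finset.sum_congr rfl (fun s _ => (hω s astar).1 hstar)]
          simp
        rw [hsum] at this
        exact this
      have hlt : ∑ s ∈ Finset.range t, B s a ω < ∑ s ∈ Finset.range t, (1 : ℝ) := by
        apply Finset.sum_lt_sum
        · intro i _
          rcases hval i a ω with h | h <;> rw [h] <;> norm_num
        · exact ⟨s₀, Finset.mem_range.mpr hs₀t, by rw [hs₀0]; norm_num⟩
      simp only [Finset.sum_const, Finset.card_range, nsmul_eq_mul, mul_one] at hlt
      linarith
    have hpa1 : p a ≠ 1 := by
      intro h
      exact absurd ((hω t a).1 h) (by rw [ht0]; norm_num)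
    have hpa0 : p a ≠ 0 := by
      intro h
      have := (hω 0 a).2 h
      have h1 := hearly 0 ht1
      rw [this] at h1
      norm_num at h1
    refine ⟨a, ⟨lt_of_le_of_ne (hp0 a) (Ne.symm hpa0), lt_of_le_of_ne (hp1 a) hpa1⟩, ?_⟩
    -- sInf {s | B s a ω = 0} = t
    apply le_antisymm
    · exact Nat.sInf_le ht0
    · apply le_csInf ⟨t, ht0⟩
      intro m hm
      by_contra hmt
      push_neg at hmt
      have := hearly m hmt
      rw [Set.mem_setOf_eq, this] at hm
      norm_num at hm
  refine ⟨hsub, ?_⟩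
  have hSfin : ({a : A | 0 < p a ∧ p a < 1}).Finite := Set.toFinite _
  calc ({t : ℕ | 1 ≤ t ∧ B t (Act t ω) ω = 0}).ncard
      ≤ ((fun a => sInf {t : ℕ | B t a ω = 0}) '' {a : A | 0 < p a ∧ p a < 1}).ncard :=
        Set.ncard_le_ncard hsub (hSfin.image _)
    _ ≤ ({a : A | 0 < p a ∧ p a < 1}).ncard := Set.ncard_image_le hSfin
    _ = (Finset.univ.filter (fun a : A => 0 < p a ∧ p a < 1)).card := by
        rw [show {a : A | 0 < p a ∧ p a < 1}
            = ↑(Finset.univ.filter (fun a : A => 0 < p a ∧ p a < 1)) by ext; simp]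
        exact Set.ncard_coe_finset _
end

section
/- In the full-information Bernoulli experts problem with a unique optimal action a* such that p_{a*} > p_b for all b ≠ a*, the regret of FTL is bounded uniformly in T: R_T(FTL) ≤ 1 + Σ_{b ≠ a*} Σ_{t=1}^∞ exp(−t·(p_{a*} − p_b)²/2) < ∞. -/
open MeasureTheory ProbabilityTheory
open scoped Classical

set_option maxHeartbeats 1000000

lemma sinh_le_mul_cosh' {x : ℝ} (hx : 0 ≤ x) : Real.sinh x ≤ x * Real.cosh x := by
  have key : ∀ y : ℝ, HasDerivAt (fun z => z * Real.cosh z - Real.sinh z)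
      (y * Real.sinh y) y := by
    intro y
    have h1 := (hasDerivAt_id y).mul (Real.hasDerivAt_cosh y)
    have h2 := Real.hasDerivAt_sinh y
    refine (h1.sub h2).congr_deriv ?_
    simp only [id_eq]
    ring
  have hmono : MonotoneOn (fun z => z * Real.cosh z - Real.sinh z) (Set.Ici 0) := by
    apply monotoneOn_of_deriv_nonneg (convex_Ici 0)
    · exact ((continuous_id.mul Real.continuous_cosh).sub Real.continuous_sinh).continuousOn
    · intro y hy
      exact ((key y).differentiableAt).differentiableWithinAt
    · intro y hy
      rw [(key y).deriv]
      rw [interior_Ici] at hy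
      exact mul_nonneg (le_of_lt hy) (Real.sinh_nonneg_iff.mpr (le_of_lt hy))
  have := hmono (Set.self_mem_Ici) (Set.mem_Ici.mpr hx) hx
  simpa using this

lemma bracket_le' {q r d : ℝ} (hq0 : 0 ≤ q) (hq1 : q ≤ 1) (hr0 : 0 ≤ r) (hr1 : r ≤ 1)
    (hd : 0 < d) (hdr : r - q = d) :
    (1 + (Real.exp d - 1) * q) * (1 + (Real.exp (-d) - 1) * r) ≤ Real.exp (-(d ^ 2) / 2) := by
  set x : ℝ := d / 2 with hxdef
  have hx0 : 0 ≤ x := by positivity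
  set c : ℝ := Real.cosh x with hcdef
  set s : ℝ := Real.sinh x with hsdef
  have hE1 : Real.exp x * Real.exp (-x) = 1 := by
    rw [← Real.exp_add]; simp
  have hEd : Real.exp d = Real.exp x * Real.exp x := by
    rw [← Real.exp_add]; congr 1; rw [hxdef]; ring
  have hEnd : Real.exp (-d) = Real.exp (-x) * Real.exp (-x) := by
    rw [← Real.exp_add]; congr 1; rw [hxdef]; ring
  have hc : c = (Real.exp x + Real.exp (-x)) / 2 := Real.cosh_eq x
  have hs : s = (Real.exp x - Real.exp (-x)) / 2 := Real.sinh_eq x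
  have h1 : 1 + (Real.exp d - 1) * q = Real.exp x * (c + (2 * q - 1) * s) := by
    rw [hc, hs, hEd, Real.exp_neg]
    have hE0 : Real.exp x ≠ 0 := (Real.exp_pos x).ne'
    field_simp
    ring
  have h2 : 1 + (Real.exp (-d) - 1) * r = Real.exp (-x) * (c - (2 * r - 1) * s) := by
    rw [hc, hs, hEnd, Real.exp_neg]
    have hE0 : Real.exp x ≠ 0 := (Real.exp_pos x).ne'
    field_simp
    ring
  have hcsq : c ^ 2 = s ^ 2 + 1 := Real.cosh_sq x
  have hc1 : 1 ≤ c := Real.one_le_cosh x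
  have hsx : x ≤ s := Real.self_le_sinh_iff.mpr hx0
  have hsc : s ≤ x * c := sinh_le_mul_cosh' hx0
  have hxc : x ≤ 2 * x * c - s := by nlinarith [mul_nonneg hx0 (sub_nonneg.mpr hc1)]
  have h2s : 2 * x * x ≤ 2 * s * (2 * x * c - s) := by
    nlinarith [mul_nonneg (sub_nonneg.mpr hsx) (sub_nonneg.mpr hxc), hx0.trans hsx,
      mul_nonneg hx0 (sub_nonneg.mpr hxc)]
  set u : ℝ := 2 * q - 1 with hudef
  set v : ℝ := 2 * r - 1 with hvdef
  have huv : -1 ≤ u * v := by nlinarith [mul_nonneg (by linarith : (0:ℝ) ≤ 1 + u) (by linarith : (0:ℝ) ≤ 1 + v), mul_nonneg (by linarith : (0:ℝ) ≤ 1 - u) (by linarith : (0:ℝ) ≤ 1 - v)]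
  have hvu : v - u = 4 * x := by rw [hudef, hvdef, hxdef]; linarith
  have hmain : (c + u * s) * (c - v * s) ≤ 1 - 2 * x ^ 2 := by
    have e1 : (c + u * s) * (c - v * s) = c ^ 2 - (v - u) * (c * s) - u * v * s ^ 2 := by ring
    rw [hcsq, hvu] at e1
    have e2 : 0 ≤ (1 + u * v) * s ^ 2 := mul_nonneg (by linarith) (sq_nonneg s)
    have h2s' : 2 * x * x ≤ 4 * x * (c * s) - 2 * s ^ 2 := by nlinarith [h2s]
    nlinarith [e1, e2, h2s']
  calc (1 + (Real.exp d - 1) * q) * (1 + (Real.exp (-d) - 1) * r)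
      = (Real.exp x * Real.exp (-x)) * ((c + u * s) * (c - v * s)) := by
        rw [h1, h2]; ring
    _ = (c + u * s) * (c - v * s) := by rw [hE1]; ring
    _ ≤ 1 - 2 * x ^ 2 := hmain
    _ = 1 + (-(d ^ 2) / 2) := by rw [hxdef]; ring
    _ ≤ Real.exp (-(d ^ 2) / 2) := Real.add_one_le_exp _ |>.trans_eq' (by ring)

theorem stmt_18
    {Ω : Type*} [MeasurableSpace Ω] (μ : Measure Ω) [IsProbabilityMeasure μ]
    {A : Type*} [Fintype A] [Nonempty A] [MeasurableSpace A] [MeasurableSingletonClass A]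
    (p : A → ℝ) (hp0 : ∀ a, 0 ≤ p a) (hp1 : ∀ a, p a ≤ 1)
    (astar : A) (hopt : ∀ b, b ≠ astar → p b < p astar)
    (B : ℕ → A → Ω → ℝ)
    (hmeas : ∀ t a, Measurable (B t a))
    (hval : ∀ t a ω, B t a ω = 0 ∨ B t a ω = 1)
    (hbern : ∀ t a, μ {ω | B t a ω = 1} = ENNReal.ofReal (p a))
    (hindep : iIndepFun
      (fun (ta : ℕ × A) => B ta.1 ta.2) μ)
    (Act : ℕ → Ω → A)
    (hActmeas : ∀ t, Measurable (Act t))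
    -- FTL with an arbitrary tie-breaking rule: the selected action is a leader
    (hFTL : ∀ t ω a, (∑ s ∈ Finset.range t, B s a ω)
      ≤ ∑ s ∈ Finset.range t, B s (Act t ω) ω)
    (T : ℕ) :
    (T : ℝ) * p astar - ∫ ω, (∑ t ∈ Finset.range T, B t (Act t ω) ω) ∂μ
      ≤ 1 + ∑ b ∈ Finset.univ.erase astar,
          ∑' t : ℕ, Real.exp (-((t : ℝ) + 1) * (p astar - p b) ^ 2 / 2) := by
  -- basic facts about B
  have hB0 : ∀ t a ω, 0 ≤ B t a ω := by
    intro t a ω; rcases hval t a ω with h | h <;> rw [h] <;> norm_num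
  have hB1 : ∀ t a ω, B t a ω ≤ 1 := by
    intro t a ω; rcases hval t a ω with h | h <;> rw [h] <;> norm_num
  have hBint : ∀ t a, Integrable (B t a) μ := by
    intro t a
    refine ⟨(hmeas t a).aestronglyMeasurable, HasFiniteIntegral.of_bounded (C := 1) ?_⟩
    filter_upwards with ω
    rw [Real.norm_eq_abs, abs_of_nonneg (hB0 t a ω)]
    exact hB1 t a ω
  have hBmean : ∀ t a, ∫ ω, B t a ω ∂μ = p a := by
    intro t a
    have hset : MeasurableSet {ω | B t a ω = 1} := hmeas t a (measurableSet_singleton 1)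
    have heq : B t a = Set.indicator {ω | B t a ω = 1} (fun _ => (1:ℝ)) := by
      funext ω
      rcases hval t a ω with h | h
      · rw [h, Set.indicator_of_notMem]
        simp [Set.mem_setOf_eq, h]
      · rw [h, Set.indicator_of_mem]
        exact h
    rw [heq, integral_indicator_const _ hset, measureReal_def, hbern, smul_eq_mul, mul_one,
      ENNReal.toReal_ofReal (hp0 a)]
  -- single-coordinate mgf computation
  have hmgf1 : ∀ (s : ℕ) (a : A) (e : ℝ),
      ∫ ω, Real.exp (e * B s a ω) ∂μ = 1 + (Real.exp e - 1) * p a := by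
    intro s a e
    have hpt : (fun ω => Real.exp (e * B s a ω))
        = fun ω => 1 + (Real.exp e - 1) * B s a ω := by
      funext ω
      rcases hval s a ω with h | h <;> rw [h] <;> simp
    rw [hpt, integral_add (integrable_const 1) ((hBint s a).const_mul _), integral_const,
      integral_const_mul, hBmean, measureReal_def, measure_univ]
    simp
  -- Chernoff bound
  have chern : ∀ b : A, b ≠ astar → ∀ t : ℕ,
      (μ {ω | 0 ≤ ∑ s ∈ Finset.range t, (B s b ω - B s astar ω)}).toReal
        ≤ Real.exp (-(t : ℝ) * (p astar - p b) ^ 2 / 2) := by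
    intro b hbne t
    set d : ℝ := p astar - p b with hddef
    have hd : 0 < d := sub_pos.mpr (hopt b hbne)
    -- the signed family
    set Y : ℕ × A → Ω → ℝ :=
      fun ta ω => (if ta.2 = astar then (-1 : ℝ) else 1) * B ta.1 ta.2 ω with hYdef
    have hYmeas : ∀ ta, Measurable (Y ta) := fun ta => (hmeas ta.1 ta.2).const_mul _
    have hYindep : iIndepFun Y μ := by
      exact hindep.comp (fun ta x => (if ta.2 = astar then (-1 : ℝ) else 1) * x)
        (fun ta => measurable_const_mul _)
    set F : Finset (ℕ × A) := Finset.range t ×ˢ ({b, astar} : Finset A) with hFdef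
    have hSsum : (fun ω => ∑ s ∈ Finset.range t, (B s b ω - B s astar ω)) = ∑ i ∈ F, Y i := by
      funext ω
      rw [Finset.sum_apply, hFdef, Finset.sum_product]
      refine Finset.sum_congr rfl fun s _ => ?_
      rw [Finset.sum_pair hbne]
      simp [hYdef, hbne]
      ring
    set Sf : Ω → ℝ := fun ω => ∑ s ∈ Finset.range t, (B s b ω - B s astar ω) with hSdef
    have hSmeas : Measurable Sf := by
      apply Finset.measurable_sum
      intro s _
      exact (hmeas s b).sub (hmeas s astar)
    have hSle : ∀ ω, Sf ω ≤ t := by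
      intro ω
      calc Sf ω ≤ ∑ s ∈ Finset.range t, (1 : ℝ) := by
            apply Finset.sum_le_sum
            intro s _
            have := hB1 s b ω; have := hB0 s astar ω; linarith
        _ = t := by simp
    have hint : Integrable (fun ω => Real.exp (d * Sf ω)) μ := by
      refine ⟨((hSmeas.const_mul d).exp).aestronglyMeasurable,
        HasFiniteIntegral.of_bounded (C := Real.exp (d * t)) ?_⟩
      filter_upwards with ω
      rw [Real.norm_eq_abs, Real.abs_exp]
      exact Real.exp_le_exp.mpr (mul_le_mul_of_nonneg_left (hSle ω) hd.le)
    have hmarkov := measure_ge_le_exp_mul_mgf (μ := μ) (X := Sf) (t := d) 0 hd.le hint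
    simp only [mul_zero, neg_zero, Real.exp_zero, one_mul] at hmarkov
    -- compute the mgf
    have hmgfY : ∀ i ∈ F, mgf (Y i) μ d =
        (if i.2 = astar then 1 + (Real.exp (-d) - 1) * p astar
          else 1 + (Real.exp d - 1) * p b) := by
      intro i hi
      rw [hFdef, Finset.mem_product, Finset.mem_insert, Finset.mem_singleton] at hi
      by_cases h : i.2 = astar
      · rw [if_pos h]
        have hY : Y i = fun ω => (-1 : ℝ) * B i.1 i.2 ω := by
          funext ω; simp only [hYdef]; rw [if_pos h]
        have : mgf (Y i) μ d = ∫ ω, Real.exp ((-d) * B i.1 i.2 ω) ∂μ := by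
          rw [mgf, hY]; congr 1; funext ω; ring_nf
        rw [this, hmgf1, h]
      · rw [if_neg h]
        have hib : i.2 = b := by tauto
        have hY : Y i = fun ω => (1 : ℝ) * B i.1 i.2 ω := by
          funext ω; simp only [hYdef]; rw [if_neg h]
        have : mgf (Y i) μ d = ∫ ω, Real.exp (d * B i.1 i.2 ω) ∂μ := by
          rw [mgf, hY]; congr 1; funext ω; ring_nf
        rw [this, hmgf1, hib]
    have hmgfS : mgf Sf μ d =
        ((1 + (Real.exp d - 1) * p b) * (1 + (Real.exp (-d) - 1) * p astar)) ^ t := by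
      rw [hSsum, hYindep.mgf_sum hYmeas F, Finset.prod_congr rfl hmgfY, hFdef,
        Finset.prod_product]
      rw [Finset.prod_congr rfl (fun s _ => Finset.prod_pair hbne)]
      simp [hbne, Finset.prod_const, Finset.card_range]
    -- bound the bracket
    have hbr : (1 + (Real.exp d - 1) * p b) * (1 + (Real.exp (-d) - 1) * p astar)
        ≤ Real.exp (-(d ^ 2) / 2) :=
      bracket_le' (hp0 b) (hp1 b) (hp0 astar) (hp1 astar) hd rfl
    have hbrnn : 0 ≤ (1 + (Real.exp d - 1) * p b) * (1 + (Real.exp (-d) - 1) * p astar) := by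
      have h1 : (0:ℝ) ≤ 1 + (Real.exp d - 1) * p b := by
        nlinarith [Real.one_le_exp hd.le, hp0 b]
      have h2 : (0:ℝ) ≤ 1 + (Real.exp (-d) - 1) * p astar := by
        nlinarith [Real.exp_pos (-d), hp0 astar, hp1 astar]
      exact mul_nonneg h1 h2
    calc (μ {ω | 0 ≤ Sf ω}).toReal ≤ mgf Sf μ d := hmarkov
      _ = ((1 + (Real.exp d - 1) * p b) * (1 + (Real.exp (-d) - 1) * p astar)) ^ t := hmgfS
      _ ≤ (Real.exp (-(d ^ 2) / 2)) ^ t := pow_le_pow_left₀ hbrnn hbr t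
      _ = Real.exp (-(t : ℝ) * d ^ 2 / 2) := by
          rw [← Real.exp_nat_mul]; congr 1; ring
  -- measurability/integrability of the played reward
  have hActInt : ∀ t, Integrable (fun ω => B t (Act t ω) ω) μ := by
    intro t
    have hrw : (fun ω => B t (Act t ω) ω)
        = fun ω => ∑ a : A, if Act t ω = a then B t a ω else 0 := by
      funext ω
      rw [Finset.sum_ite_eq]
      simp
    have hm : Measurable (fun ω => B t (Act t ω) ω) := by
      rw [hrw]
      apply Finset.measurable_sum
      intro a _
      exact Measurable.ite ((hActmeas t) (measurableSet_singleton a)) (hmeas t a)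
        measurable_const
    refine ⟨hm.aestronglyMeasurable, HasFiniteIntegral.of_bounded (C := 1) ?_⟩
    filter_upwards with ω
    rw [Real.norm_eq_abs, abs_of_nonneg (hB0 t _ ω)]
    exact hB1 t _ ω
  -- per-round regret bound
  have hround : ∀ t, p astar - ∫ ω, B t (Act t ω) ω ∂μ
      ≤ (μ {ω | Act t ω ≠ astar}).toReal := by
    intro t
    have hset : MeasurableSet {ω | Act t ω ≠ astar} :=
      ((hActmeas t) (measurableSet_singleton astar)).compl
    have hptw : ∀ ω, B t astar ω
        - Set.indicator {ω' | Act t ω' ≠ astar} (fun _ => (1:ℝ)) ω ≤ B t (Act t ω) ω := by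
      intro ω
      by_cases h : Act t ω = astar
      · rw [Set.indicator_of_notMem (by simp [Set.mem_setOf_eq, h])]
        rw [h]
        simp
      · rw [Set.indicator_of_mem (by simp [Set.mem_setOf_eq, h])]
        have := hB1 t astar ω
        have := hB0 t (Act t ω) ω
        linarith
    have hind : Integrable (Set.indicator {ω' | Act t ω' ≠ astar} (fun _ => (1:ℝ))) μ :=
      (integrable_const (1:ℝ)).indicator hset
    have hmono := integral_mono ((hBint t astar).sub hind) (hActInt t) hptw
    simp only [Pi.sub_apply] at hmono
    rw [integral_sub (hBint t astar) hind, hBmean,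
      integral_indicator_const _ hset, smul_eq_mul, mul_one, measureReal_def] at hmono
    linarith
  -- union bound
  have hunion : ∀ t, (μ {ω | Act t ω ≠ astar}).toReal
      ≤ ∑ b ∈ Finset.univ.erase astar,
          (μ {ω | 0 ≤ ∑ s ∈ Finset.range t, (B s b ω - B s astar ω)}).toReal := by
    intro t
    have hsub : {ω | Act t ω ≠ astar} ⊆
        ⋃ b ∈ Finset.univ.erase astar,
          {ω | 0 ≤ ∑ s ∈ Finset.range t, (B s b ω - B s astar ω)} := by
      intro ω hω
      refine Set.mem_biUnion (Finset.mem_erase.mpr ⟨hω, Finset.mem_univ _⟩) ?_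
      rw [Set.mem_setOf_eq, Finset.sum_sub_distrib, sub_nonneg]
      exact hFTL t ω astar
    have h1 : μ {ω | Act t ω ≠ astar} ≤ ∑ b ∈ Finset.univ.erase astar,
        μ {ω | 0 ≤ ∑ s ∈ Finset.range t, (B s b ω - B s astar ω)} :=
      (measure_mono hsub).trans (measure_biUnion_finset_le _ _)
    have h2 : ∑ b ∈ Finset.univ.erase astar,
        μ {ω | 0 ≤ ∑ s ∈ Finset.range t, (B s b ω - B s astar ω)} ≠ ⊤ := by
      refine (ENNReal.sum_lt_top.mpr fun b _ => ?_).ne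
      exact measure_lt_top μ _
    calc (μ {ω | Act t ω ≠ astar}).toReal
        ≤ (∑ b ∈ Finset.univ.erase astar,
            μ {ω | 0 ≤ ∑ s ∈ Finset.range t, (B s b ω - B s astar ω)}).toReal :=
          ENNReal.toReal_mono h2 h1
      _ = _ := ENNReal.toReal_sum fun b _ => (measure_lt_top μ _).ne
  -- per-round sum bound for t ≥ 1
  have hkey : ∀ t : ℕ, p astar - ∫ ω, B t (Act t ω) ω ∂μ
      ≤ ∑ b ∈ Finset.univ.erase astar, Real.exp (-(t : ℝ) * (p astar - p b) ^ 2 / 2) := by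
    intro t
    refine (hround t).trans ((hunion t).trans (Finset.sum_le_sum fun b hb => ?_))
    exact chern b (Finset.mem_erase.mp hb).1 t
  -- summability
  have hsummable : ∀ b : A, b ≠ astar →
      Summable (fun i : ℕ => Real.exp (-((i : ℝ) + 1) * (p astar - p b) ^ 2 / 2)) := by
    intro b hb
    have hd : 0 < p astar - p b := sub_pos.mpr (hopt b hb)
    have heq : (fun i : ℕ => Real.exp (-((i : ℝ) + 1) * (p astar - p b) ^ 2 / 2))
        = fun i : ℕ => Real.exp (-(p astar - p b) ^ 2 / 2)
            * (Real.exp (-(p astar - p b) ^ 2 / 2)) ^ i := by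
      funext i
      rw [← Real.exp_nat_mul, ← Real.exp_add]
      congr 1
      ring
    rw [heq]
    refine Summable.mul_left _ (summable_geometric_of_lt_one (Real.exp_nonneg _) ?_)
    rw [Real.exp_lt_one_iff]
    have := pow_pos hd 2
    linarith
  -- rewrite the integral of the sum
  rw [integral_finset_sum _ fun t _ => hActInt t]
  have hregret : (T : ℝ) * p astar - ∑ t ∈ Finset.range T, ∫ ω, B t (Act t ω) ω ∂μ
      = ∑ t ∈ Finset.range T, (p astar - ∫ ω, B t (Act t ω) ω ∂μ) := by
    rw [Finset.sum_sub_distrib, Finset.sum_const, Finset.card_range, nsmul_eq_mul]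
  rw [hregret]
  -- RHS tail is nonneg
  have htail : 0 ≤ ∑ b ∈ Finset.univ.erase astar,
      ∑' t : ℕ, Real.exp (-((t : ℝ) + 1) * (p astar - p b) ^ 2 / 2) :=
    Finset.sum_nonneg fun b _ => tsum_nonneg fun t => (Real.exp_pos _).le
  rcases T with _ | n
  · simp only [Finset.range_zero, Finset.sum_empty]
    linarith
  · rw [Finset.sum_range_succ']
    have h0 : p astar - ∫ ω, B 0 (Act 0 ω) ω ∂μ ≤ 1 := by
      have : 0 ≤ ∫ ω, B 0 (Act 0 ω) ω ∂μ :=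
        integral_nonneg fun ω => hB0 0 _ ω
      have := hp1 astar
      linarith
    have hrest : ∑ i ∈ Finset.range n, (p astar - ∫ ω, B (i + 1) (Act (i + 1) ω) ω ∂μ)
        ≤ ∑ b ∈ Finset.univ.erase astar,
            ∑' t : ℕ, Real.exp (-((t : ℝ) + 1) * (p astar - p b) ^ 2 / 2) := by
      calc ∑ i ∈ Finset.range n, (p astar - ∫ ω, B (i + 1) (Act (i + 1) ω) ω ∂μ)
          ≤ ∑ i ∈ Finset.range n, ∑ b ∈ Finset.univ.erase astar,
              Real.exp (-((i : ℝ) + 1) * (p astar - p b) ^ 2 / 2) := by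
            refine Finset.sum_le_sum fun i _ => (hkey (i + 1)).trans_eq ?_
            refine Finset.sum_congr rfl fun b _ => ?_
            congr 1
            push_cast
            ring
        _ = ∑ b ∈ Finset.univ.erase astar, ∑ i ∈ Finset.range n,
              Real.exp (-((i : ℝ) + 1) * (p astar - p b) ^ 2 / 2) := Finset.sum_comm
        _ ≤ ∑ b ∈ Finset.univ.erase astar,
              ∑' t : ℕ, Real.exp (-((t : ℝ) + 1) * (p astar - p b) ^ 2 / 2) := by
            refine Finset.sum_le_sum fun b hb => ?_
            exact Summable.sum_le_tsum _ (fun i _ => (Real.exp_pos _).le)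
              (hsummable b (Finset.mem_erase.mp hb).1)
    linarith
end
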